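/- If f : Mat_{n,n}(K)^{m+1} → K is invariant under the left-right action of SL_n(K) × SL_n(K), then the function (X₁,…,X_m) ↦ f(Id, X₁,…,X_m) is invariant under the simultaneous conjugation action of GL_n(K) on Mat_{n,n}(K)^m. (Assume K is algebraically closed so every scalar has an n-th root.) -/

import Mathlib

theorem restrict_invariant_conj {K : Type*} [Field K] [IsAlgClosed K] {n m : ℕ}
    (f : (Fin (m + 1) → Matrix (Fin n) (Fin n) K) → K)
    (hf : ∀ (P Q : Matrix (Fin n) (Fin n) K), P.det = 1 → Q.det = 1 →
      ∀ Y : Fin (m + 1) → Matrix (Fin n) (Fin n) K,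
        f (fun i => P * Y i * Q⁻¹) = f Y)
    (g : GL (Fin n) K) (X : Fin m → Matrix (Fin n) (Fin n) K) :
    f (Fin.cons 1 (fun i => (g : Matrix (Fin n) (Fin n) K) * X i * ((g⁻¹ : GL (Fin n) K) : Matrix (Fin n) (Fin n) K))) =
      f (Fin.cons 1 X) := by
  rcases Nat.eq_zero_or_pos n with hn | hn
  · subst hn
    congr 1
    funext i
    exact Subsingleton.elim _ _
  · have hdet : (g : Matrix (Fin n) (Fin n) K).det ≠ 0 := by
      have := (Matrix.isUnit_iff_isUnit_det _).mp g.isUnit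
      exact this.ne_zero
    obtain ⟨c, hc⟩ := IsAlgClosed.exists_pow_nat_eq ((g : Matrix (Fin n) (Fin n) K).det)⁻¹ hn
    have hc0 : c ≠ 0 := by
      intro h
      rw [h, zero_pow hn.ne'] at hc
      exact hdet (by simpa using hc.symm)
    set A : Matrix (Fin n) (Fin n) K := (g : Matrix (Fin n) (Fin n) K)
    set P : Matrix (Fin n) (Fin n) K := c • A with hP
    have hPdet : P.det = 1 := by
      rw [hP, Matrix.det_smul, Fintype.card_fin, hc]
      field_simp
    have hginv : ((g⁻¹ : GL (Fin n) K) : Matrix (Fin n) (Fin n) K) = A⁻¹ := by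
      simp [A, Matrix.coe_units_inv]
    have hPinv : P⁻¹ = c⁻¹ • A⁻¹ := by
      have : Invertible c := invertibleOfNonzero hc0
      rw [hP, Matrix.inv_smul (A := A) c (isUnit_iff_ne_zero.mpr hdet), invOf_eq_inv]
    have key := hf P P hPdet hPdet (Fin.cons 1 X)
    rw [← key]
    congr 1
    funext i
    refine Fin.cases ?_ ?_ i
    · simp only [Fin.cons_zero]
      rw [hPinv, hP]
      rw [mul_one]
      rw [Matrix.smul_mul, Matrix.mul_smul, smul_smul, mul_inv_cancel₀ hc0, one_smul,
        Matrix.mul_nonsing_inv _ (isUnit_iff_ne_zero.mpr hdet)]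
    · intro j
      simp only [Fin.cons_succ, hginv, hPinv, hP]
      rw [← hP, hPinv]
      simp [Matrix.mul_smul, Matrix.smul_mul, smul_smul, inv_mul_cancel₀ hc0, mul_inv_cancel₀ hc0, hP]
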